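/- Let f : ℝ × ℝ → ℝ be differentiable, 2π-periodic in its first variable (f(φ + 2π, z) = f(φ, z) for all φ, z), and suppose that ∂f/∂φ(φ, z) − z · ∂f/∂z(φ, z) = f(φ, z) for all (φ, z) ∈ ℝ × ℝ. Then f is identically zero. -/

import Mathlib

/-- A differentiable function `f(φ, z)` which is `2π`-periodic in `φ` and
satisfies `∂f/∂φ − z ∂f/∂z = f` vanishes identically (the Remark following
Example 2.9). -/
theorem cylinder_no_symplectic_section
    (f : ℝ × ℝ → ℝ) (hdiff : Differentiable ℝ f)
    (hper : ∀ φ z : ℝ, f (φ + 2 * Real.pi, z) = f (φ, z))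
    (hpde : ∀ p : ℝ × ℝ,
      fderiv ℝ f p (1, 0) - p.2 * fderiv ℝ f p (0, 1) = f p) :
    ∀ p : ℝ × ℝ, f p = 0 := by
  have key : ∀ φ z t : ℝ,
      f (φ + t, z * Real.exp (-t)) * Real.exp (-t) = f (φ, z) := by
    intro φ z
    set c : ℝ → ℝ × ℝ := fun t => (φ + t, z * Real.exp (-t)) with hc
    have he : ∀ t : ℝ, HasDerivAt (fun s : ℝ => Real.exp (-s)) (-Real.exp (-t)) t := by
      intro t
      have := (Real.hasDerivAt_exp (-t)).comp t (hasDerivAt_neg t)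
      exact this.congr_deriv (by ring)
    have hcd : ∀ t, HasDerivAt c (1, -(z * Real.exp (-t))) t := by
      intro t
      have h1 : HasDerivAt (fun s : ℝ => φ + s) 1 t := (hasDerivAt_id t).const_add φ
      have h2 : HasDerivAt (fun s : ℝ => z * Real.exp (-s)) (-(z * Real.exp (-t))) t := by
        have := (he t).const_mul z
        exact this.congr_deriv (by ring)
      exact h1.prodMk h2
    have hg : ∀ t, HasDerivAt (fun s => f (c s)) (f (c t)) t := by
      intro t
      have hcomp := (hdiff (c t)).hasFDerivAt.comp_hasDerivAt t (hcd t)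
      have heq : fderiv ℝ f (c t) (1, -(z * Real.exp (-t))) = f (c t) := by
        have hsplit : ((1 : ℝ), -(z * Real.exp (-t)))
            = ((1:ℝ), (0:ℝ)) + (-(z * Real.exp (-t))) • ((0:ℝ), (1:ℝ)) := by
          simp
        rw [hsplit, map_add, map_smul]
        have hp := hpde (c t)
        have h2 : (c t).2 = z * Real.exp (-t) := rfl
        rw [h2] at hp
        simp only [smul_eq_mul]
        linarith
      rw [heq] at hcomp
      exact hcomp
    have hh : ∀ t, HasDerivAt (fun s => f (c s) * Real.exp (-s)) 0 t := by
      intro t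
      have := (hg t).mul (he t)
      exact this.congr_deriv (by ring)
    intro t
    have hconst : (fun s => f (c s) * Real.exp (-s)) t
        = (fun s => f (c s) * Real.exp (-s)) 0 :=
      is_const_of_deriv_eq_zero (fun s => (hh s).differentiableAt) (fun s => (hh s).deriv) t 0
    simpa [hc] using hconst
  rintro ⟨φ, z⟩
  have hpern : ∀ (n : ℕ) (w : ℝ), f (φ + 2 * Real.pi * n, w) = f (φ, w) := by
    intro n
    induction n with
    | zero => simp
    | succ n ih =>
      intro w
      have harg : φ + 2 * Real.pi * ((n : ℝ) + 1) = (φ + 2 * Real.pi * n) + 2 * Real.pi := by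
        ring
      push_cast
      rw [harg, hper, ih]
  have hseq : ∀ n : ℕ,
      f (φ, z * Real.exp (-(2 * Real.pi * n))) * Real.exp (-(2 * Real.pi * n)) = f (φ, z) := by
    intro n
    rw [← key φ z (2 * Real.pi * n), hpern n]
  -- limit as n → ∞
  have h1 : Filter.Tendsto (fun n : ℕ => -(2 * Real.pi * (n : ℝ))) Filter.atTop Filter.atBot := by
    apply Filter.tendsto_neg_atBot_iff.mpr
    exact Filter.Tendsto.const_mul_atTop (by positivity) tendsto_natCast_atTop_atTop
  have hexp : Filter.Tendsto (fun n : ℕ => Real.exp (-(2 * Real.pi * (n : ℝ))))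
      Filter.atTop (nhds 0) := Real.tendsto_exp_atBot.comp h1
  have hz : Filter.Tendsto (fun n : ℕ => z * Real.exp (-(2 * Real.pi * (n : ℝ))))
      Filter.atTop (nhds 0) := by
    have := hexp.const_mul z
    simpa using this
  have hpt : Filter.Tendsto (fun n : ℕ => ((φ : ℝ), z * Real.exp (-(2 * Real.pi * (n : ℝ)))))
      Filter.atTop (nhds (φ, 0)) := tendsto_const_nhds.prodMk_nhds hz
  have hf : Filter.Tendsto (fun n : ℕ => f (φ, z * Real.exp (-(2 * Real.pi * (n : ℝ)))))
      Filter.atTop (nhds (f (φ, 0))) := (hdiff.continuous.tendsto (φ, 0)).comp hpt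
  have hprod : Filter.Tendsto
      (fun n : ℕ => f (φ, z * Real.exp (-(2 * Real.pi * (n : ℝ)))) * Real.exp (-(2 * Real.pi * (n : ℝ))))
      Filter.atTop (nhds 0) := by
    have := hf.mul hexp
    simpa using this
  have hconstseq : Filter.Tendsto
      (fun n : ℕ => f (φ, z * Real.exp (-(2 * Real.pi * (n : ℝ)))) * Real.exp (-(2 * Real.pi * (n : ℝ))))
      Filter.atTop (nhds (f (φ, z))) := by
    simp only [hseq]
    exact tendsto_const_nhds
  exact (tendsto_nhds_unique hconstseq hprod)
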